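/- For every cycle C_k with k ≥ 3, there exists a 3-correspondence assignment of C_k that admits no packing of three pairwise disjoint correspondence colorings; consequently χ*_c(C_k) ≥ 4. -/

import Mathlib

/-!
A 3-correspondence assignment of the cycle `C_k` (Mathlib's
`SimpleGraph.cycleGraph k`) is a consistent family of permutations
`σ i j h : Fin 3 ≃ Fin 3` on its edges; a packing consists of three
correspondence colorings that are pairwise distinct at every vertex.  For every
`k ≥ 3` some 3-correspondence assignment of `C_k` admits no packing; hence
`χ*_c(C_k) ≥ 4`.
-/

lemma derangement_sign3 : ∀ g : Equiv.Perm (Fin 3), (∀ x, g x ≠ x) → Equiv.Perm.sign g = 1 := by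
  decide

theorem stmt18 (k : ℕ) (hk : 3 ≤ k) :
    ∃ σ : ∀ i j : Fin k, (SimpleGraph.cycleGraph k).Adj i j → (Fin 3 ≃ Fin 3),
      (∀ (i j : Fin k) (h : (SimpleGraph.cycleGraph k).Adj i j),
        σ j i h.symm = (σ i j h).symm) ∧
      ¬ ∃ φ : Fin 3 → Fin k → Fin 3,
          (∀ (c : Fin 3) (i j : Fin k) (h : (SimpleGraph.cycleGraph k).Adj i j),
            σ i j h (φ c i) ≠ φ c j) ∧
          (∀ i : Fin k, Function.Injective fun c => φ c i) := by
  classical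
  refine ⟨fun i j _ => if (i.val = 0 ∧ j.val = k - 1) ∨ (j.val = 0 ∧ i.val = k - 1)
      then Equiv.swap 0 1 else 1, ?_, ?_⟩
  · intro i j h
    by_cases hc : (i.val = 0 ∧ j.val = k - 1) ∨ (j.val = 0 ∧ i.val = k - 1)
    · simp [hc, or_comm.mp hc]
    · have hc' : ¬ ((j.val = 0 ∧ i.val = k - 1) ∨ (i.val = 0 ∧ j.val = k - 1)) := by tauto
      simp [hc, hc', Equiv.Perm.one_symm]
  · rintro ⟨φ, hcol, hinj⟩
    have hbij : ∀ i : Fin k, Function.Bijective fun c => φ c i := fun i =>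
      Finite.injective_iff_bijective.mp (hinj i)
    set p : Fin k → Equiv.Perm (Fin 3) := fun i => Equiv.ofBijective _ (hbij i) with hp
    -- adjacency of consecutive vertices
    have hadj : ∀ i : ℕ, (hi : i + 1 < k) →
        (SimpleGraph.cycleGraph k).Adj ⟨i, by omega⟩ ⟨i + 1, by omega⟩ := by
      intro i hi
      rw [SimpleGraph.cycleGraph_adj']
      right
      simp only [Fin.sub_def]
      have h1 : k - i + (i + 1) = k + 1 := by omega
      rw [h1, Nat.add_mod_left, Nat.mod_eq_of_lt (by omega)]
    -- along a non-wrap edge signs agree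
    have hstep : ∀ i : ℕ, (hi : i + 1 < k) →
        Equiv.Perm.sign (p ⟨i + 1, by omega⟩) = Equiv.Perm.sign (p ⟨i, by omega⟩) := by
      intro i hi
      have hcc : ¬ (i = 0 ∧ i + 1 = k - 1) := by omega
      have hne : ∀ c, φ c (⟨i, by omega⟩ : Fin k) ≠ φ c ⟨i + 1, by omega⟩ := by
        intro c
        have h0 := hcol c ⟨i, by omega⟩ ⟨i + 1, by omega⟩ (hadj i hi)
        simpa [hcc] using h0
      have hder : ∀ x, (p ⟨i + 1, by omega⟩ * (p ⟨i, by omega⟩)⁻¹) x ≠ x := by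
        intro x hx
        have h1 : φ ((p ⟨i, by omega⟩)⁻¹ x) ⟨i, by omega⟩ = x :=
          Equiv.apply_symm_apply (p ⟨i, by omega⟩) x
        have h2 : φ ((p ⟨i, by omega⟩)⁻¹ x) ⟨i + 1, by omega⟩ = x := hx
        exact hne ((p ⟨i, by omega⟩)⁻¹ x) (h1.trans h2.symm)
      have hs := derangement_sign3 _ hder
      rw [map_mul, map_inv] at hs
      have := mul_eq_one_iff_eq_inv.mp hs
      rw [this, inv_inv]
    -- all signs equal sign at 0
    have hall : ∀ i : ℕ, (hi : i < k) →
        Equiv.Perm.sign (p ⟨i, hi⟩) = Equiv.Perm.sign (p ⟨0, by omega⟩) := by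
      intro i
      induction i with
      | zero => intro _; rfl
      | succ n ih => intro hi; rw [hstep n hi]; exact ih (by omega)
    -- the wrap edge
    have hadjw : (SimpleGraph.cycleGraph k).Adj ⟨k - 1, by omega⟩ ⟨0, by omega⟩ := by
      rw [SimpleGraph.cycleGraph_adj']
      right
      simp only [Fin.sub_def]
      have h1 : k - (k - 1) + 0 = 1 := by omega
      rw [h1, Nat.mod_eq_of_lt (by omega)]
    have hccw : ((k - 1 = 0 ∧ 0 = k - 1) ∨ (0 = 0 ∧ k - 1 = k - 1)) := by omega
    have hnew : ∀ c, Equiv.swap (0 : Fin 3) 1 (φ c ⟨k - 1, by omega⟩) ≠ φ c ⟨0, by omega⟩ := by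
      intro c
      have h0 := hcol c ⟨k - 1, by omega⟩ ⟨0, by omega⟩ hadjw
      simpa [hccw] using h0
    have hderw : ∀ x, (Equiv.swap (0 : Fin 3) 1 * p ⟨k - 1, by omega⟩ *
        (p ⟨0, by omega⟩)⁻¹) x ≠ x := by
      intro x hx
      have h1 : φ ((p ⟨0, by omega⟩)⁻¹ x) ⟨0, by omega⟩ = x :=
        Equiv.apply_symm_apply (p ⟨0, by omega⟩) x
      have h2 : Equiv.swap (0 : Fin 3) 1 (φ ((p ⟨0, by omega⟩)⁻¹ x) ⟨k - 1, by omega⟩) = x := hx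
      exact hnew ((p ⟨0, by omega⟩)⁻¹ x) (h2.trans h1.symm)
    have hsw := derangement_sign3 _ hderw
    rw [map_mul, map_mul, map_inv, Equiv.Perm.sign_swap (by decide)] at hsw
    rw [hall (k - 1) (by omega)] at hsw
    revert hsw
    generalize Equiv.Perm.sign (p ⟨0, by omega⟩) = s
    revert s
    decide
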